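/- With P(N) as the boundary count of the canonical N-point configuration, for every N ∈ ℕ with N ≠ 9 and N ≥ 7, setting Ñ := N − P(N), one has P(N) ≤ P(Ñ + 1) + 6. -/

import Mathlib

/-- Every `N ≥ 1` has a canonical decomposition `N = 3s²+3s+1+(s+1)k+j`
with `k ≤ 5` and `j ≤ s`. -/
lemma canonical_decomp (N : ℕ) (hN : 1 ≤ N) :
    ∃ s k j, k ≤ 5 ∧ j ≤ s ∧ N = 3 * s ^ 2 + 3 * s + 1 + (s + 1) * k + j := by
  set Q : ℕ → Prop := fun s => 3 * s ^ 2 + 3 * s + 1 ≤ N with hQ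
  have h0 : Q 0 := by simp [Q]; omega
  set s := Nat.findGreatest Q N with hs
  have hsle : Q s := Nat.findGreatest_spec (Nat.zero_le N) h0
  have hsN : s ≤ N := Nat.findGreatest_le N
  have hsltN : s < N := by
    rcases lt_or_eq_of_le hsN with h | h
    · exact h
    · exfalso
      have : 3 * s ^ 2 + 3 * s + 1 ≤ N := hsle
      rw [h] at this
      nlinarith
  have hnot : ¬ Q (s + 1) := by
    apply Nat.findGreatest_is_greatest (Nat.lt_succ_self s)
    omega
  have hQs : 3 * s ^ 2 + 3 * s + 1 ≤ N := hsle
  have hQs1 : ¬ (3 * (s+1) ^ 2 + 3 * (s+1) + 1 ≤ N) := hnot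
  push_neg at hQs1
  set r := N - (3 * s ^ 2 + 3 * s + 1) with hr
  have hrlt : r < 6 * (s + 1) := by
    have : 3 * (s+1) ^ 2 + 3 * (s+1) + 1 = 3 * s ^ 2 + 3 * s + 1 + 6 * (s + 1) := by ring
    rw [this] at hQs1
    omega
  refine ⟨s, r / (s + 1), r % (s + 1), ?_, ?_, ?_⟩
  · have h6 : r / (s + 1) < 6 := Nat.div_lt_of_lt_mul (by omega)
    omega
  · have := Nat.mod_lt r (show 0 < s + 1 by omega)
    omega
  · have := Nat.div_add_mod r (s + 1)
    omega

theorem canonical_boundary_count_recursive_succ (P : ℕ → ℕ)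
    (hhex : ∀ s : ℕ, P (3 * s ^ 2 + 3 * s + 1) = 6 * s)
    (hgen : ∀ s k j : ℕ, k ≤ 5 → j ≤ s → ¬(k = 0 ∧ j = 0) →
      P (3 * s ^ 2 + 3 * s + 1 + (s + 1) * k + j) = 6 * s + k + 1)
    (N : ℕ) (hN7 : 7 ≤ N) (hN9 : N ≠ 9) :
    P N ≤ P (N - P N + 1) + 6 := by
  obtain ⟨s, k, j, hk, hj, hNdef⟩ := canonical_decomp N (by omega)
  obtain ⟨t, rfl⟩ : ∃ t, s = t + 1 := by
    rcases s with _ | t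
    · exfalso
      norm_num at hNdef
      omega
    · exact ⟨t, rfl⟩
  by_cases hc : k = 0 ∧ j = 0
  · -- hexagonal case
    obtain ⟨rfl, rfl⟩ := hc
    have hNval : N = 3 * (t+1) ^ 2 + 3 * (t+1) + 1 := by rw [hNdef]; ring
    have hP : P N = 6 * (t + 1) := by rw [hNval]; exact hhex (t+1)
    rcases t with _ | u
    · -- N = 7
      have hN7' : N = 7 := by rw [hNval]; norm_num
      have h2 : P 2 = 2 := by
        have := hgen 0 1 0 (by norm_num) le_rfl (by simp)
        norm_num at this
        exact this
      have hsub : N - P N + 1 = 2 := by omega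
      rw [hsub, h2]
      omega
    · have hPE := hgen (u+1) 0 1 (by norm_num) (by omega) (by simp)
      set E := 3 * (u+1) ^ 2 + 3 * (u+1) + 1 + ((u+1) + 1) * 0 + 1 with hEdef
      have key : N + 1 = P N + E := by rw [hP, hNval, hEdef]; ring
      have hE1 : 0 < E := by rw [hEdef]; positivity
      have hsub : N - P N + 1 = E := by omega
      rw [hsub, hPE, hP] <;> omega
  · -- general case
    have hP : P N = 6 * (t + 1) + k + 1 := by rw [hNdef]; exact hgen (t+1) k j hk hj hc
    by_cases hjt : j ≤ t
    · have hPE := hgen t k j hk hjt hc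
      set E := 3 * t ^ 2 + 3 * t + 1 + (t + 1) * k + j with hEdef
      have key : N + 1 = P N + E := by rw [hP, hNdef, hEdef]; ring
      have hE1 : 0 < E := by rw [hEdef]; positivity
      have hsub : N - P N + 1 = E := by omega
      rw [hsub, hPE, hP] <;> omega
    · have hjval : j = t + 1 := by omega
      subst hjval
      by_cases hk5 : k = 5
      · subst hk5
        have hPE := hhex (t+1)
        set E := 3 * (t+1) ^ 2 + 3 * (t+1) + 1 with hEdef
        have key : N + 1 = P N + E := by rw [hP, hNdef, hEdef]; ring
        have hE1 : 0 < E := by rw [hEdef]; positivity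
        have hsub : N - P N + 1 = E := by omega
        rw [hsub, hPE, hP] <;> omega
      · have hPE := hgen t (k+1) 0 (by omega) (Nat.zero_le t) (by omega)
        set E := 3 * t ^ 2 + 3 * t + 1 + (t + 1) * (k + 1) + 0 with hEdef
        have key : N + 1 = P N + E := by rw [hP, hNdef, hEdef]; ring
        have hE1 : 0 < E := by rw [hEdef]; positivity
        have hsub : N - P N + 1 = E := by omega
        rw [hsub, hPE, hP] <;> omega
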